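/- Fixed-point characterization: suppose S is m×m symmetric PSD, δ > 0, and A ∈ ℝ^{m×q} of full column rank satisfy S A = A(δ I_q + Aᵀ A). Let Aᵀ A = V Λ Vᵀ be a spectral decomposition with Λ positive definite diagonal. Then the columns of A V Λ^{−1/2} are orthonormal eigenvectors of S with corresponding eigenvalues given by the diagonal of Λ + δ I_q. -/

import Mathlib

open Matrix

theorem stmt14 {m q : ℕ} (S : Matrix (Fin m) (Fin m) ℝ) (hS : S.PosSemidef)
    (A : Matrix (Fin m) (Fin q) ℝ) (hrank : A.rank = q)
    (δ : ℝ) (hδ : 0 < δ)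
    (hfix : S * A = A * (δ • (1 : Matrix (Fin q) (Fin q) ℝ) + Aᵀ * A))
    (V : Matrix (Fin q) (Fin q) ℝ) (hV : Vᵀ * V = 1)
    (Λ : Fin q → ℝ) (hΛpos : ∀ i, 0 < Λ i)
    (hdecomp : Aᵀ * A = V * Matrix.diagonal Λ * Vᵀ)
    (W : Matrix (Fin m) (Fin q) ℝ)
    (hW : W = A * V * Matrix.diagonal (fun i => (Real.sqrt (Λ i))⁻¹)) :
    Wᵀ * W = 1 ∧ S * W = W * Matrix.diagonal (fun i => Λ i + δ) := by
  subst hW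
  set D : Matrix (Fin q) (Fin q) ℝ := Matrix.diagonal (fun i => (Real.sqrt (Λ i))⁻¹) with hD
  have hsq : ∀ i, Real.sqrt (Λ i) * Real.sqrt (Λ i) = Λ i := fun i =>
    Real.mul_self_sqrt (hΛpos i).le
  have hne : ∀ i, Real.sqrt (Λ i) ≠ 0 := fun i =>
    (Real.sqrt_pos.mpr (hΛpos i)).ne'
  constructor
  · have h1 : (A * V * D)ᵀ * (A * V * D) = D * (Vᵀ * ((Aᵀ * A) * (V * D))) := by
      simp [hD, Matrix.transpose_mul, Matrix.mul_assoc]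
    rw [h1, hdecomp]
    calc D * (Vᵀ * (V * Matrix.diagonal Λ * Vᵀ * (V * D)))
        = D * ((Vᵀ * V) * Matrix.diagonal Λ * ((Vᵀ * V) * D)) := by
          simp only [Matrix.mul_assoc]
      _ = D * (Matrix.diagonal Λ * D) := by rw [hV]; simp
      _ = 1 := by
          rw [hD, Matrix.diagonal_mul_diagonal, Matrix.diagonal_mul_diagonal]
          have : (fun i => (Real.sqrt (Λ i))⁻¹ * (Λ i * (Real.sqrt (Λ i))⁻¹)) =
              fun _ => (1 : ℝ) := by
            funext i
            rw [← hsq i]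
            field_simp
            rw [Real.sqrt_sq (Real.sqrt_nonneg _)]
            exact div_self (pow_ne_zero 2 (hne i))
          rw [this, Matrix.diagonal_one]
  · have hkey : δ • D + Matrix.diagonal Λ * D = D * Matrix.diagonal (fun i => Λ i + δ) := by
      ext i j
      rcases eq_or_ne i j with h | h
      · subst h
        simp [hD, Matrix.diagonal_mul_diagonal, Matrix.diagonal_apply_eq]
        ring
      · simp [hD, Matrix.diagonal_mul_diagonal, Matrix.diagonal_apply_ne _ h]
    calc S * (A * V * D)
        = (S * A) * (V * D) := by simp only [Matrix.mul_assoc]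
      _ = A * ((δ • (1 : Matrix (Fin q) (Fin q) ℝ) + Aᵀ * A) * (V * D)) := by
          rw [hfix, Matrix.mul_assoc]
      _ = A * (V * (δ • D) + V * (Matrix.diagonal Λ * D)) := by
          congr 1
          rw [add_mul, smul_mul_assoc, one_mul, hdecomp]
          congr 1
          · rw [Matrix.mul_smul]
          · calc V * Matrix.diagonal Λ * Vᵀ * (V * D)
                = V * Matrix.diagonal Λ * ((Vᵀ * V) * D) := by simp only [Matrix.mul_assoc]
              _ = V * (Matrix.diagonal Λ * D) := by rw [hV]; simp [Matrix.mul_assoc]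
      _ = A * (V * (δ • D + Matrix.diagonal Λ * D)) := by simp only [Matrix.mul_add]
      _ = A * V * D * Matrix.diagonal (fun i => Λ i + δ) := by
          rw [hkey]
          simp only [Matrix.mul_assoc]
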